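/- Let R be a commutative ring, and let G and Y be objects of the derived category D(R) of R-modules. Suppose Y admits a tower over G with shifts n_1, …, n_k. Then length_R(H^0(Y)) ≤ Σ_{i=1}^{k} length_R(H^{n_i}(G)) in ℕ∞, where H^{n_i}(G) = H^0(G[n_i]). -/

import Mathlib

open CategoryTheory Limits Pretriangulated

/-- The length of a module, defined as the Krull dimension of its lattice of submodules. -/
noncomputable def moduleLength (R M : Type*) [Ring R] [AddCommGroup M] [Module R M] : ℕ∞ :=
  WithBot.unbotD 0 (Order.krullDim (Submodule R M))

section HeightProd

variable {β γ : Type*} [Preorder β] [Preorder γ]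

private lemma height_prod_le_aux (m : ℕ) :
    ∀ x : β × γ, Order.height x.1 + Order.height x.2 ≤ m → Order.height x ≤ m := by
  induction m with
  | zero =>
    intro x hx
    have h1 : Order.height x.1 = 0 := by
      have := le_trans le_self_add hx
      simpa using this
    have h2 : Order.height x.2 = 0 := by
      have := le_trans le_add_self hx
      simpa using this
    rw [show ((0 : ℕ) : ℕ∞) = 0 from rfl, nonpos_iff_eq_zero, Order.height_eq_zero]
    intro y hy
    exact ⟨(Order.height_eq_zero.1 h1) hy.1, (Order.height_eq_zero.1 h2) hy.2⟩
  | succ m ih =>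
    intro x hx
    rw [Order.height_le_coe_iff]
    intro y hy
    have key : Order.height y.1 + Order.height y.2 + 1 ≤
        Order.height x.1 + Order.height x.2 := by
      rcases Prod.lt_iff.1 hy with ⟨h1, h2⟩ | ⟨h1, h2⟩
      · have hfin : Order.height y.1 < ⊤ := by
          refine lt_of_le_of_lt (le_trans (Order.height_mono h1.le)
            (le_trans le_self_add hx)) (ENat.coe_lt_top _)
        have hlt : Order.height y.1 < Order.height x.1 := Order.height_strictMono h1 hfin
        calc Order.height y.1 + Order.height y.2 + 1
            = (Order.height y.1 + 1) + Order.height y.2 := by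
              rw [add_right_comm]
          _ ≤ Order.height x.1 + Order.height x.2 :=
              add_le_add (Order.add_one_le_of_lt hlt) (Order.height_mono h2)
      · have hfin : Order.height y.2 < ⊤ := by
          refine lt_of_le_of_lt (le_trans (Order.height_mono h2.le)
            (le_trans le_add_self hx)) (ENat.coe_lt_top _)
        have hlt : Order.height y.2 < Order.height x.2 := Order.height_strictMono h2 hfin
        calc Order.height y.1 + Order.height y.2 + 1
            = Order.height y.1 + (Order.height y.2 + 1) := by rw [add_assoc]
          _ ≤ Order.height x.1 + Order.height x.2 :=
              add_le_add (Order.height_mono h1) (Order.add_one_le_of_lt hlt)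
    have key2 : Order.height y.1 + Order.height y.2 + 1 ≤ (m : ℕ∞) + 1 := by
      refine le_trans (key.trans hx) ?_
      push_cast
      rfl
    have key3 : Order.height y.1 + Order.height y.2 ≤ (m : ℕ∞) :=
      (ENat.add_le_add_iff_right (by simp)).1 key2
    have := ih y key3
    refine lt_of_le_of_lt this ?_
    exact_mod_cast Nat.lt_succ_self m

lemma height_prod_le (x : β × γ) :
    Order.height x ≤ Order.height x.1 + Order.height x.2 := by
  cases hn : (Order.height x.1 + Order.height x.2) with
  | top => exact le_top
  | coe m => exact height_prod_le_aux m x hn.le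

end HeightProd

section LengthLemmas

variable {R : Type*} [Ring R]

lemma moduleLength_eq_iSup_height (M : Type*) [AddCommGroup M] [Module R M] :
    moduleLength R M = ⨆ a : Submodule R M, Order.height a := by
  rw [moduleLength, Order.krullDim_eq_iSup_height_of_nonempty, WithBot.unbotD_coe]

lemma moduleLength_eq_zero_of_subsingleton (M : Type*) [AddCommGroup M] [Module R M]
    [Subsingleton M] : moduleLength R M = 0 := by
  have : Unique (Submodule R M) := uniqueOfSubsingleton ⊥
  rw [moduleLength, Order.krullDim_eq_zero_of_unique]
  rfl

lemma moduleLength_eq_of_equiv {M N : Type*} [AddCommGroup M] [Module R M]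
    [AddCommGroup N] [Module R N] (e : M ≃ₗ[R] N) :
    moduleLength R M = moduleLength R N := by
  rw [moduleLength, moduleLength,
    Order.krullDim_eq_of_orderIso (Submodule.orderIsoMapComap e)]

lemma moduleLength_le_of_exact {A B C : Type*} [AddCommGroup A] [Module R A]
    [AddCommGroup B] [Module R B] [AddCommGroup C] [Module R C]
    (f : A →ₗ[R] B) (g : B →ₗ[R] C) (hfg : LinearMap.ker g ≤ LinearMap.range f) :
    moduleLength R B ≤ moduleLength R A + moduleLength R C := by
  set φ : Submodule R B → Submodule R A × Submodule R C :=
    fun T => (T.comap f, T.map g) with hφdef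
  have hφ : StrictMono φ := by
    intro T T' hTT'
    refine lt_of_le_of_ne ⟨Submodule.comap_mono hTT'.le, Submodule.map_mono hTT'.le⟩ ?_
    intro heq
    have h1 : T.comap f = T'.comap f := congrArg Prod.fst heq
    have h2 : T.map g = T'.map g := congrArg Prod.snd heq
    refine hTT'.ne (le_antisymm hTT'.le ?_)
    intro x hx
    have hgx : g x ∈ T.map g := h2 ▸ Submodule.mem_map_of_mem hx
    obtain ⟨y, hy, hgy⟩ := hgx
    have hker : x - y ∈ LinearMap.ker g := by
      simp [LinearMap.mem_ker, map_sub, hgy]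
    obtain ⟨a, ha⟩ := hfg hker
    have haT' : a ∈ T'.comap f := by
      rw [Submodule.mem_comap, ha]
      exact T'.sub_mem hx (hTT'.le hy)
    rw [← h1] at haT'
    have hfa : f a ∈ T := haT'
    have : y + (x - y) ∈ T := T.add_mem hy (ha ▸ hfa)
    simpa using this
  rw [moduleLength_eq_iSup_height, moduleLength_eq_iSup_height, moduleLength_eq_iSup_height]
  refine iSup_le fun T => ?_
  calc Order.height T ≤ Order.height (φ T) :=
        Order.height_le_height_apply_of_strictMono φ hφ T
    _ ≤ Order.height (φ T).1 + Order.height (φ T).2 := height_prod_le _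
    _ ≤ _ := add_le_add (le_iSup _ _) (le_iSup _ _)

end LengthLemmas

universe w u

variable {R : Type u} [CommRing R] [HasDerivedCategory.{w} (ModuleCat.{u} R)]

/-- A tower of distinguished triangles over `G` reaching `Y` with shifts `n 0, …, n (k-1)`:
objects `0 ≅ E 0, E 1, …, E k ≅ Y` of the derived category together with distinguished
triangles `E i ⟶ E (i+1) ⟶ G⟦n i⟧ ⟶ (E i)⟦1⟧`. -/
def IsTower (G Y : DerivedCategory (ModuleCat.{u} R)) {k : ℕ} (n : Fin k → ℤ)
    (E : Fin (k + 1) → DerivedCategory (ModuleCat.{u} R)) : Prop :=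
  IsZero (E 0) ∧ Nonempty (E (Fin.last k) ≅ Y) ∧
    ∀ i : Fin k, ∃ (f : E i.castSucc ⟶ E i.succ) (g : E i.succ ⟶ G⟦n i⟧)
      (h : G⟦n i⟧ ⟶ (E i.castSucc)⟦(1 : ℤ)⟧),
      Triangle.mk f g h ∈ distTriang (DerivedCategory (ModuleCat.{u} R))

/-- If an object `Y` of the derived category `D(R)` admits a tower over
`G` with shifts `n 0, …, n (k-1)`, then
`length_R H⁰(Y) ≤ ∑ i, length_R H^{n i}(G)` in `ℕ∞`. -/
theorem length_H0_le_sum_of_tower (G Y : DerivedCategory (ModuleCat.{u} R))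
    {k : ℕ} (n : Fin k → ℤ) (E : Fin (k + 1) → DerivedCategory (ModuleCat.{u} R))
    (hE : IsTower G Y n E) :
    moduleLength R ((DerivedCategory.homologyFunctor (ModuleCat.{u} R) 0).obj Y) ≤
      ∑ i : Fin k,
        moduleLength R ((DerivedCategory.homologyFunctor (ModuleCat.{u} R) (n i)).obj G) := by
  obtain ⟨h0, ⟨eY⟩, htri⟩ := hE
  set H := DerivedCategory.homologyFunctor (ModuleCat.{u} R) 0 with hH
  -- the homology of the zero object is subsingleton
  have hsub : Subsingleton (H.obj (E 0)) := by
    have hid : 𝟙 (H.obj (E 0)) = 0 := by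
      rw [← H.map_id, h0.eq_of_src (𝟙 (E 0)) 0, H.map_zero]
    refine ⟨fun a b => ?_⟩
    have ha := congrArg (fun φ => ModuleCat.Hom.hom φ a) hid
    have hb := congrArg (fun φ => ModuleCat.Hom.hom φ b) hid
    simpa using ha.trans hb.symm
  have key : ∀ m : ℕ, ∀ hm : m ≤ k,
      moduleLength R (H.obj (E ⟨m, Nat.lt_succ_of_le hm⟩)) ≤
        ∑ j : Fin m, moduleLength R
          ((DerivedCategory.homologyFunctor (ModuleCat.{u} R) (n (Fin.castLE hm j))).obj G) := by
    intro m
    induction m with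
    | zero =>
      intro hm
      simp only [Finset.univ_eq_empty, Finset.sum_empty]
      have : Subsingleton (H.obj (E ⟨0, Nat.lt_succ_of_le hm⟩)) := hsub
      rw [moduleLength_eq_zero_of_subsingleton]
    | succ m ih =>
      intro hm
      have hm' : m ≤ k := Nat.le_of_succ_le hm
      set i : Fin k := ⟨m, hm⟩ with hi
      obtain ⟨f, g, h3, hT⟩ := htri i
      have hex := DerivedCategory.HomologySequence.exact₂ (Triangle.mk f g h3) hT 0
      have hker := (ShortComplex.moduleCat_exact_iff_ker_sub_range _).1 hex
      have step := moduleLength_le_of_exact _ _ hker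
      -- identify the shifted homology
      have eshift : H.obj (G⟦n i⟧) ≅
          (DerivedCategory.homologyFunctor (ModuleCat.{u} R) (n i)).obj G :=
        (H.isoShift (n i)).app G
      have hlen3 : moduleLength R (H.obj (G⟦n i⟧)) =
          moduleLength R ((DerivedCategory.homologyFunctor (ModuleCat.{u} R) (n i)).obj G) :=
        moduleLength_eq_of_equiv eshift.toLinearEquiv
      have hcast : (E i.succ) = E ⟨m + 1, Nat.lt_succ_of_le hm⟩ := rfl
      have hcast' : (E i.castSucc) = E ⟨m, Nat.lt_succ_of_le hm'⟩ := rfl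
      calc moduleLength R (H.obj (E ⟨m + 1, Nat.lt_succ_of_le hm⟩))
          ≤ moduleLength R (H.obj (E i.castSucc)) + moduleLength R (H.obj (G⟦n i⟧)) := step
        _ ≤ (∑ j : Fin m, moduleLength R
              ((DerivedCategory.homologyFunctor (ModuleCat.{u} R) (n (Fin.castLE hm' j))).obj G))
            + moduleLength R
              ((DerivedCategory.homologyFunctor (ModuleCat.{u} R) (n i)).obj G) := by
            rw [hlen3]
            exact add_le_add_left (ih hm') _
        _ = ∑ j : Fin (m + 1), moduleLength R
              ((DerivedCategory.homologyFunctor (ModuleCat.{u} R) (n (Fin.castLE hm j))).obj G) := by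
            rw [Fin.sum_univ_castSucc]
            rfl
  have hmain := key k le_rfl
  have hY : moduleLength R (H.obj Y) = moduleLength R (H.obj (E (Fin.last k))) :=
    moduleLength_eq_of_equiv (H.mapIso eY).symm.toLinearEquiv
  rw [hY]
  refine le_trans hmain (le_of_eq ?_)
  refine Finset.sum_congr rfl fun j _ => ?_
  rfl
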